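/- If every finitely generated subgroup of a group G has the Magnus property, then G has the Magnus property. -/

import Mathlib

open Subgroup

private lemma key_list {G : Type*} [Group G] (h : G) :
    ∀ l : List G, (∀ y ∈ l, ∃ c : G, y = c * h * c⁻¹ ∨ y = c * h⁻¹ * c⁻¹) →
      ∃ s : Finset G, ∀ (H : Subgroup G), (↑s : Set G) ⊆ ↑H → ∀ hh : h ∈ H,
        l.prod ∈ (normalClosure {(⟨h, hh⟩ : H)}).map H.subtype := by
  classical
  intro l
  induction l with
  | nil => exact fun _ => ⟨∅, fun H _ hh => by simp [Subgroup.one_mem]⟩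
  | cons y l ih =>
    intro hl
    obtain ⟨c, hc⟩ := hl y List.mem_cons_self
    obtain ⟨s, hs⟩ := ih (fun z hz => hl z (List.mem_cons_of_mem y hz))
    refine ⟨insert c s, fun H hsH hh => ?_⟩
    have hcH : c ∈ H := hsH (Finset.mem_coe.mpr (Finset.mem_insert_self c s))
    have hrest := hs H (fun z hz => hsH (Finset.mem_insert_of_mem (Finset.mem_coe.mp hz))) hh
    rw [List.prod_cons]
    refine Subgroup.mul_mem _ ?_ hrest
    have hyH : y ∈ H := by
      rcases hc with hc | hc <;> rw [hc] <;>
        exact H.mul_mem (H.mul_mem hcH (by simp [hh])) (H.inv_mem hcH)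
    refine ⟨⟨y, hyH⟩, ?_, rfl⟩
    have hmem : (⟨h, hh⟩ : H) ∈ normalClosure {(⟨h, hh⟩ : H)} :=
      subset_normalClosure rfl
    have := (normalClosure_normal (s := {(⟨h, hh⟩ : H)})).conj_mem
    rcases hc with hc | hc
    · have : (⟨y, hyH⟩ : H) = ⟨c, hcH⟩ * ⟨h, hh⟩ * (⟨c, hcH⟩)⁻¹ := by
        ext; simp [hc]
      rw [this]
      exact (normalClosure_normal).conj_mem _ hmem _
    · have : (⟨y, hyH⟩ : H) = ⟨c, hcH⟩ * (⟨h, hh⟩)⁻¹ * (⟨c, hcH⟩)⁻¹ := by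
        ext; simp [hc]
      rw [this]
      exact (normalClosure_normal).conj_mem _ (Subgroup.inv_mem _ hmem) _

private lemma key {G : Type*} [Group G] {g h : G} (hg : g ∈ normalClosure {h}) :
    ∃ s : Finset G, ∀ (H : Subgroup G), (↑s : Set G) ⊆ ↑H → ∀ hh : h ∈ H,
      g ∈ (normalClosure {(⟨h, hh⟩ : H)}).map H.subtype := by
  have hg' : g ∈ (Subgroup.closure (Group.conjugatesOfSet {h})).toSubmonoid := hg
  rw [Subgroup.closure_toSubmonoid] at hg'
  obtain ⟨l, hl, hprod⟩ := Submonoid.exists_list_of_mem_closure hg'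
  have hl' : ∀ y ∈ l, ∃ c : G, y = c * h * c⁻¹ ∨ y = c * h⁻¹ * c⁻¹ := by
    intro y hy
    rcases hl y hy with hy' | hy'
    · obtain ⟨a, ha, hconj⟩ := Group.mem_conjugatesOfSet_iff.mp hy'
      obtain ⟨c, hc⟩ := isConj_iff.mp hconj
      exact ⟨c, Or.inl (by rw [← hc, Set.mem_singleton_iff.mp ha])⟩
    · obtain ⟨a, ha, hconj⟩ := Group.mem_conjugatesOfSet_iff.mp
        (Set.mem_inv.mp hy')
      obtain ⟨c, hc⟩ := isConj_iff.mp hconj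
      refine ⟨c, Or.inr ?_⟩
      rw [Set.mem_singleton_iff.mp ha] at hc
      rw [← inv_inv y, ← hc]; group
  obtain ⟨s, hs⟩ := key_list h l hl'
  exact ⟨s, fun H hsH hh => hprod ▸ hs H hsH hh⟩

def MagnusProperty (G : Type*) [Group G] : Prop :=
  ∀ g h : G, Subgroup.normalClosure {g} = Subgroup.normalClosure {h} →
    IsConj g h ∨ IsConj g h⁻¹

theorem locally_magnus_imp_magnus (G : Type*) [Group G]
    (h : ∀ H : Subgroup G, H.FG → MagnusProperty H) :
    MagnusProperty G := by
  classical
  intro g₁ g₂ heq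
  have hg1 : g₁ ∈ normalClosure {g₂} := heq ▸ subset_normalClosure rfl
  have hg2 : g₂ ∈ normalClosure {g₁} := heq ▸ subset_normalClosure rfl
  obtain ⟨s₁, hs₁⟩ := key hg1
  obtain ⟨s₂, hs₂⟩ := key hg2
  set F : Finset G := insert g₁ (insert g₂ (s₁ ∪ s₂)) with hF
  set H : Subgroup G := Subgroup.closure ↑F with hH
  have hFG : H.FG := ⟨F, rfl⟩
  have hsub : (↑F : Set G) ⊆ ↑H := Subgroup.subset_closure
  have h1 : g₁ ∈ H := hsub (by simp [hF])
  have h2 : g₂ ∈ H := hsub (by simp [hF])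
  have hs1H : (↑s₁ : Set G) ⊆ ↑H := fun x hx => hsub (by simp [hF]; tauto)
  have hs2H : (↑s₂ : Set G) ⊆ ↑H := fun x hx => hsub (by simp [hF]; tauto)
  have m1 := hs₁ H hs1H h2
  have m2 := hs₂ H hs2H h1
  obtain ⟨a, ha, ha'⟩ := m1
  obtain ⟨b, hb, hb'⟩ := m2
  have ha2 : a = ⟨g₁, h1⟩ := Subtype.ext ha'
  have hb2 : b = ⟨g₂, h2⟩ := Subtype.ext hb'
  rw [ha2] at ha; rw [hb2] at hb
  have hncl : normalClosure {(⟨g₁, h1⟩ : H)} = normalClosure {(⟨g₂, h2⟩ : H)} := by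
    apply le_antisymm <;> exact normalClosure_le_normal (Set.singleton_subset_iff.mpr ‹_›)
  rcases h H hFG ⟨g₁, h1⟩ ⟨g₂, h2⟩ hncl with hc | hc
  · exact Or.inl (by simpa using H.subtype.map_isConj hc)
  · exact Or.inr (by simpa using H.subtype.map_isConj hc)
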